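/- Let G be a directed graph and f a positional monotone winning strategy for k cops against one robber in the cops-and-robber game on G. Then there exists a positional monotone winning strategy f* for k cops such that for every position (U,v) arising in a play consistent with f*: f*(U,v) \ U ≠ ∅, and every u ∈ f*(U,v) \ U is reachable from v in G − U. -/

import Mathlib

/-- Vertices reachable from `v` in `G − X`: along edges whose targets avoid `X`. -/
def reachAvoid {V : Type*} (E : V → V → Prop) (X : Set V) (v : V) : Set V :=
  {w | Relation.ReflTransGen (fun a b => E a b ∧ b ∉ X) v w}

/-- Cop positions `(U, v)` that arise in plays of the cops-and-robber game
consistent with the positional cop strategy `f`. -/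
inductive FReach {V : Type*} (E : V → V → Prop) (f : Set V → V → Set V) : Set V → V → Prop
  | init (v : V) : FReach E f ∅ v
  | step (U : Set V) (v : V) (h : FReach E f U v) (v' : V)
      (hv' : v' ∈ reachAvoid E (U ∩ f U v) v) (hv'' : v' ∉ f U v) :
      FReach E f (f U v) v'

/-- One round of the cops-and-robber game played according to the positional cop
strategy `f`: from the cop position `p` to the cop position `q`. -/
def copStep {V : Type*} (E : V → V → Prop) (f : Set V → V → Set V)
    (p q : Set V × V) : Prop :=
  q.1 = f p.1 p.2 ∧ q.2 ∈ reachAvoid E (p.1 ∩ q.1) p.2 ∧ q.2 ∉ q.1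

/-- `f` uses at most `k` cops (on positions arising in plays consistent with `f`). -/
def UsesAtMost {V : Type*} (E : V → V → Prop) (f : Set V → V → Set V) (k : ℕ) : Prop :=
  ∀ U v, FReach E f U v → (f U v).Finite ∧ (f U v).ncard ≤ k

/-- `f` is robber-monotone: in any consistent play no vacated cop vertex is
reachable by the robber. -/
def StratMonotone {V : Type*} (E : V → V → Prop) (f : Set V → V → Set V) : Prop :=
  ∀ U v, FReach E f U v → ∀ u ∈ U \ f U v, u ∉ reachAvoid E (U ∩ f U v) v

/-- `f` is winning: there is no infinite play consistent with `f`
(so the robber is always eventually captured). -/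
def StratWinning {V : Type*} (E : V → V → Prop) (f : Set V → V → Set V) : Prop :=
  ¬ ∃ p : ℕ → Set V × V, (p 0).1 = ∅ ∧ ∀ n, copStep E f (p n) (p (n + 1))

section Aux

open Relation Classical

variable {V : Type*} (E : V → V → Prop) (f : Set V → V → Set V)

/-- Paths from `v` avoiding both `A` and `B` (on all vertices after the start). -/
def Avoid2 (A B : Set V) (v w : V) : Prop :=
  Relation.ReflTransGen (fun a b => E a b ∧ b ∉ A ∧ b ∉ B) v w

/-- The simulation invariant between a position `(Us, v)` of the active strategy
and a position `(U, v)` arising in a play against `f`. -/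
def SimInv (Us : Set V) (v : V) (U : Set V) : Prop :=
  FReach E f U v ∧ v ∉ Us ∧ v ∉ U ∧
    ∀ w ∈ reachAvoid E (Us ∩ U) v, Avoid2 E Us U v w

/-- The "useful part" of the move `f U v` as seen from the active position `(Us, v)`. -/
def mv (U Us : Set V) (v : V) : Set V :=
  f U v ∩ (Us ∪ reachAvoid E Us v)

/-- Reversed one-round relation (successor is smaller). -/
def rl (E : V → V → Prop) (f : Set V → V → Set V) : (Set V × V) → (Set V × V) → Prop :=
  fun q p => copStep E f p q

/-- Rank of a cop position in the well-founded part of the game against `f`. -/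
noncomputable def rankOf (E : V → V → Prop) (f : Set V → V → Set V) (p : Set V × V) : Ordinal :=
  if h : Acc (rl E f) p then h.rank else 0

/-- Ranks of invariant witnesses with a useful move. -/
def Cand (E : V → V → Prop) (f : Set V → V → Set V) (Us : Set V) (v : V) : Set Ordinal :=
  {o | ∃ U, SimInv E f Us v U ∧ (f U v ∩ reachAvoid E Us v).Nonempty ∧ rankOf E f (U, v) = o}

def GoodPos (E : V → V → Prop) (f : Set V → V → Set V) (Us : Set V) (v : V) : Prop :=
  (Cand E f Us v).Nonempty

/-- A minimal-rank invariant witness with a useful move. -/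
noncomputable def pick {E : V → V → Prop} {f : Set V → V → Set V} {Us : Set V} {v : V}
    (h : GoodPos E f Us v) : Set V :=
  Classical.choose (csInf_mem h)

lemma pick_spec {E : V → V → Prop} {f : Set V → V → Set V} {Us : Set V} {v : V}
    (h : GoodPos E f Us v) :
    SimInv E f Us v (pick h) ∧ (f (pick h) v ∩ reachAvoid E Us v).Nonempty ∧
      rankOf E f (pick h, v) = sInf (Cand E f Us v) :=
  Classical.choose_spec (csInf_mem h)

/-- The active strategy. -/
noncomputable def fstar (E : V → V → Prop) (f : Set V → V → Set V) : Set V → V → Set V :=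
  fun Us v => if h : GoodPos E f Us v then mv E f (pick h) Us v else ∅

variable {E f}

lemma mem_reachAvoid {X : Set V} {v w : V} :
    w ∈ reachAvoid E X v ↔ Relation.ReflTransGen (fun a b => E a b ∧ b ∉ X) v w := Iff.rfl

lemma rtg_endpoint {r : V → V → Prop} {v w : V} (h : Relation.ReflTransGen r v w) :
    w = v ∨ ∃ x, r x w := by
  rcases h.cases_tail with h | ⟨c, _, hc⟩
  · exact Or.inl h
  · exact Or.inr ⟨c, hc⟩

lemma avoid2_endpoint {A B : Set V} {v w : V} (h : Avoid2 E A B v w) :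
    w = v ∨ (w ∉ A ∧ w ∉ B) := by
  rcases rtg_endpoint h with h | ⟨x, hx⟩
  · exact Or.inl h
  · exact Or.inr ⟨hx.2.1, hx.2.2⟩

lemma reachAvoid_endpoint {X : Set V} {v w : V} (h : w ∈ reachAvoid E X v) :
    w = v ∨ w ∉ X := by
  rcases rtg_endpoint h with h | ⟨x, hx⟩
  · exact Or.inl h
  · exact Or.inr hx.2

/-- From the invariant: no vertex of `U \ Us` is robber-reachable avoiding `Us`. -/
lemma SimInv.not_reach {Us U : Set V} {v : V} (hInv : SimInv E f Us v U) :
    ∀ u ∈ U \ Us, u ∉ reachAvoid E Us v := by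
  rintro u ⟨huU, huUs⟩ hr
  have h1 : u ∈ reachAvoid E (Us ∩ U) v :=
    Relation.ReflTransGen.mono (fun a b hab => ⟨hab.1, fun hc => hab.2 hc.1⟩) _ _ hr
  rcases avoid2_endpoint (hInv.2.2.2 u h1) with rfl | ⟨_, h3⟩
  · exact hInv.2.2.1 huU
  · exact h3 huU

/-- Preservation of the invariant under a "useless" move of `f` (the robber stays). -/
lemma inv_skip (hmon : StratMonotone E f) {Us U : Set V} {v : V} (hInv : SimInv E f Us v U)
    (hskip : ∀ x ∈ f U v, x ∉ reachAvoid E Us v) : SimInv E f Us v (f U v) := by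
  have hvW : v ∉ f U v := fun h => hskip v h Relation.ReflTransGen.refl
  have hFR : FReach E f (f U v) v :=
    FReach.step U v hInv.1 v Relation.ReflTransGen.refl hvW
  refine ⟨hFR, hInv.2.1, hvW, ?_⟩
  intro w hw
  rw [mem_reachAvoid] at hw
  induction hw with
  | refl => exact Relation.ReflTransGen.refl
  | @tail x y _ h2 ih =>
    obtain ⟨hE, hnot⟩ := h2
    have hyUs : y ∉ Us := by
      intro hyUs
      have hyW : y ∉ f U v := fun h => hnot ⟨hyUs, h⟩
      by_cases hyU : y ∈ U
      · have h1 : y ∈ reachAvoid E (U ∩ f U v) v :=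
          (Relation.ReflTransGen.mono (fun a b hab => ⟨hab.1, fun hc => hab.2.2 hc.2⟩) _ _ ih).tail
            ⟨hE, fun hc => hyW hc.2⟩
        exact hmon U v hInv.1 y ⟨hyU, hyW⟩ h1
      · have h1 : y ∈ reachAvoid E (Us ∩ U) v :=
          (Relation.ReflTransGen.mono (fun a b hab => ⟨hab.1, fun hc => hab.2.1 hc.1⟩) _ _ ih).tail
            ⟨hE, fun hc => hyU hc.2⟩
        rcases avoid2_endpoint (hInv.2.2.2 y h1) with rfl | ⟨h3, _⟩
        · exact hInv.2.1 hyUs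
        · exact h3 hyUs
    have hyW : y ∉ f U v := fun hyW =>
      hskip y hyW ((Relation.ReflTransGen.mono (fun a b hab => ⟨hab.1, hab.2.1⟩) _ _ ih).tail ⟨hE, hyUs⟩)
    exact ih.tail ⟨hE, hyUs, hyW⟩

/-- Key structural claim: any robber path consistent with the active move avoids `Us`,
avoids `U ∩ f U v`, and meets `f U v` only inside the active move. -/
lemma claimG (hmon : StratMonotone E f) {Us U : Set V} {v : V} (hInv : SimInv E f Us v U) :
    ∀ w, Relation.ReflTransGen (fun a b => E a b ∧ b ∉ Us ∩ mv E f U Us v) v w →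
      Relation.ReflTransGen (fun a b => E a b ∧ b ∉ Us ∧ b ∉ U ∩ f U v ∧
        (b ∈ f U v → b ∈ mv E f U Us v)) v w := by
  intro w hw
  induction hw with
  | refl => exact Relation.ReflTransGen.refl
  | @tail x y _ h2 ih =>
    obtain ⟨hE, hnot⟩ := h2
    have hyUs : y ∉ Us := by
      intro hyUs
      have hyWs : y ∉ mv E f U Us v := fun h => hnot ⟨hyUs, h⟩
      have hyW : y ∉ f U v := fun hyW => hyWs ⟨hyW, Or.inl hyUs⟩
      by_cases hyU : y ∈ U
      · have h1 : y ∈ reachAvoid E (U ∩ f U v) v :=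
          (Relation.ReflTransGen.mono (fun a b hab => ⟨hab.1, hab.2.2.1⟩) _ _ ih).tail
            ⟨hE, fun hc => hyW hc.2⟩
        exact hmon U v hInv.1 y ⟨hyU, hyW⟩ h1
      · have h1 : y ∈ reachAvoid E (Us ∩ U) v :=
          (Relation.ReflTransGen.mono (fun a b hab => ⟨hab.1, fun hc => hab.2.1 hc.1⟩) _ _ ih).tail
            ⟨hE, fun hc => hyU hc.2⟩
        rcases avoid2_endpoint (hInv.2.2.2 y h1) with rfl | ⟨h3, _⟩
        · exact hInv.2.1 hyUs
        · exact h3 hyUs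
    have hyRA : y ∈ reachAvoid E Us v :=
      (Relation.ReflTransGen.mono (fun a b hab => ⟨hab.1, hab.2.1⟩) _ _ ih).tail ⟨hE, hyUs⟩
    have hyUW : y ∉ U ∩ f U v := by
      rintro ⟨hyU, _⟩
      exact hInv.not_reach y ⟨hyU, hyUs⟩ hyRA
    exact ih.tail ⟨hE, hyUs, hyUW, fun h => ⟨h, Or.inr hyRA⟩⟩

/-- After a useful active move and a robber response: the response is a legal response
against `f`, and the invariant is re-established. -/
lemma useful_trans (hmon : StratMonotone E f) {Us U : Set V} {v : V} (hInv : SimInv E f Us v U)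
    {v' : V} (hv' : v' ∈ reachAvoid E (Us ∩ mv E f U Us v) v) (hv'W : v' ∉ mv E f U Us v) :
    v' ∈ reachAvoid E (U ∩ f U v) v ∧ v' ∉ f U v ∧
      SimInv E f (mv E f U Us v) v' (f U v) := by
  have hG := claimG hmon hInv v' hv'
  have hv'notW : v' ∉ f U v := by
    rcases rtg_endpoint hG with rfl | ⟨x, hx⟩
    · exact fun h => hv'W ⟨h, Or.inr Relation.ReflTransGen.refl⟩
    · exact fun h => hv'W (hx.2.2.2 h)
  have hv'RA : v' ∈ reachAvoid E (U ∩ f U v) v :=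
    Relation.ReflTransGen.mono (fun a b hab => ⟨hab.1, hab.2.2.1⟩) _ _ hG
  have hFR : FReach E f (f U v) v' := FReach.step U v hInv.1 v' hv'RA hv'notW
  refine ⟨hv'RA, hv'notW, hFR, hv'W, hv'notW, ?_⟩
  intro w hw
  rw [mem_reachAvoid] at hw
  suffices H : Avoid2 E (mv E f U Us v) (f U v) v' w ∧
      Relation.ReflTransGen (fun a b => E a b ∧ b ∉ Us ∩ mv E f U Us v) v w from H.1
  induction hw with
  | refl => exact ⟨Relation.ReflTransGen.refl, hv'⟩
  | @tail x y _ h2 ih =>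
    obtain ⟨hE, hnot⟩ := h2
    have hyc : y ∉ Us ∩ mv E f U Us v := by
      rintro ⟨h1, h2'⟩
      exact hnot ⟨h2', h2'.1⟩
    have comp' := ih.2.tail ⟨hE, hyc⟩
    have hGy := claimG hmon hInv y comp'
    have hyW : y ∉ f U v := by
      rcases rtg_endpoint hGy with rfl | ⟨x', hx'⟩
      · exact fun h => hnot ⟨⟨h, Or.inr Relation.ReflTransGen.refl⟩, h⟩
      · exact fun h => hnot ⟨hx'.2.2.2 h, h⟩
    have hyWs : y ∉ mv E f U Us v := fun h => hyW h.1
    exact ⟨ih.1.tail ⟨hE, hyWs, hyW⟩, comp'⟩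


/-- Dropping a cop outside the active move is safe: robber cannot reach it. -/
lemma mv_safe (hmon : StratMonotone E f) {Us U : Set V} {v : V} (hInv : SimInv E f Us v U) :
    ∀ u ∈ Us \ mv E f U Us v, u ∉ reachAvoid E (Us ∩ mv E f U Us v) v := by
  rintro u ⟨huUs, _⟩ hr
  rcases rtg_endpoint (claimG hmon hInv u hr) with rfl | ⟨x, hx⟩
  · exact hInv.2.1 huUs
  · exact hx.2.1 huUs

lemma no_inf_play (hwin : StratWinning E f) {U : Set V} {v : V} (h : FReach E f U v) :
    ∀ g : ℕ → Set V × V, g 0 = (U, v) → (∀ n, copStep E f (g n) (g (n + 1))) → False := by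
  induction h with
  | init v =>
    intro g g0 gs
    exact hwin ⟨g, by rw [g0], gs⟩
  | step U v h v' hv' hv'' ih =>
    intro g g0 gs
    refine ih (fun n => Nat.casesOn n (U, v) g) rfl ?_
    intro n
    cases n with
    | zero =>
      show copStep E f (U, v) (g 0)
      rw [g0]
      exact ⟨rfl, hv', hv''⟩
    | succ m => exact gs m

lemma acc_of_freach (hwin : StratWinning E f) {U : Set V} {v : V} (h : FReach E f U v) :
    Acc (rl E f) (U, v) := by
  by_contra hna
  have key : ∀ p : Set V × V, ¬ Acc (rl E f) p →
      ∃ q, copStep E f p q ∧ ¬ Acc (rl E f) q := by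
    intro p hp
    by_contra hq
    push_neg at hq
    exact hp (Acc.intro p fun q hq' => hq q hq')
  let g : ℕ → {p : Set V × V // ¬ Acc (rl E f) p} := fun n =>
    Nat.rec ⟨(U, v), hna⟩
      (fun _ ih => ⟨Classical.choose (key ih.1 ih.2),
        (Classical.choose_spec (key ih.1 ih.2)).2⟩) n
  refine no_inf_play hwin h (fun n => (g n).1) rfl ?_
  intro n
  exact (Classical.choose_spec (key (g n).1 (g n).2)).1

lemma rank_lt {p q : Set V × V} (hp : Acc (rl E f) p) (hs : copStep E f p q) :
    rankOf E f q < rankOf E f p := by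
  have hq : Acc (rl E f) q := hp.inv hs
  have e1 : rankOf E f p = hp.rank := dif_pos hp
  have e2 : rankOf E f q = hq.rank := dif_pos hq
  rw [e1, e2]
  exact hp.rank_lt_of_rel hs

/-- From any invariant witness, skipping useless moves of `f` reaches a witness
whose move is useful, without increasing the rank. -/
lemma to_useful (hmon : StratMonotone E f) (hwin : StratWinning E f) {Us U : Set V} {v : V}
    (hInv : SimInv E f Us v U) :
    ∃ U', SimInv E f Us v U' ∧ (f U' v ∩ reachAvoid E Us v).Nonempty ∧
      rankOf E f (U', v) ≤ rankOf E f (U, v) := by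
  have hacc := acc_of_freach hwin hInv.1
  have H : ∀ p : Set V × V, Acc (rl E f) p → ∀ U, p = (U, v) → SimInv E f Us v U →
      ∃ U', SimInv E f Us v U' ∧ (f U' v ∩ reachAvoid E Us v).Nonempty ∧
        rankOf E f (U', v) ≤ rankOf E f p := by
    intro p hp
    induction hp with
    | intro p hsucc IH =>
      rintro U rfl hInv
      by_cases hu : (f U v ∩ reachAvoid E Us v).Nonempty
      · exact ⟨U, hInv, hu, le_rfl⟩
      · have hskip : ∀ x ∈ f U v, x ∉ reachAvoid E Us v := fun x hx hr => hu ⟨x, hx, hr⟩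
        have hInv' := inv_skip hmon hInv hskip
        have hstep : copStep E f (U, v) (f U v, v) :=
          ⟨rfl, Relation.ReflTransGen.refl, hInv'.2.2.1⟩
        obtain ⟨U', h1, h2, h3⟩ := IH (f U v, v) hstep (f U v) rfl hInv'
        exact ⟨U', h1, h2, h3.trans (rank_lt (Acc.intro _ hsucc) hstep).le⟩
  exact H (U, v) hacc U rfl hInv

lemma good_of_inv (hmon : StratMonotone E f) (hwin : StratWinning E f) {Us U : Set V} {v : V}
    (hInv : SimInv E f Us v U) : GoodPos E f Us v := by
  obtain ⟨U', h1, h2, _⟩ := to_useful hmon hwin hInv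
  exact ⟨rankOf E f (U', v), U', h1, h2, rfl⟩

lemma freach_good (hmon : StratMonotone E f) (hwin : StratWinning E f) {Us : Set V} {v : V}
    (h : FReach E (fstar E f) Us v) : GoodPos E f Us v := by
  induction h with
  | init v =>
    have hInv : SimInv E f (∅ : Set V) v ∅ := by
      refine ⟨FReach.init v, Set.notMem_empty v, Set.notMem_empty v, ?_⟩
      intro w hw
      exact Relation.ReflTransGen.mono (fun a b hab => ⟨hab.1, Set.notMem_empty b, Set.notMem_empty b⟩) _ _ hw
    exact good_of_inv hmon hwin hInv
  | step Us v h v' hv' hv'' ih =>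
    have hspec := pick_spec ih
    have hfs : fstar E f Us v = mv E f (pick ih) Us v := dif_pos ih
    rw [hfs] at hv' hv'' ⊢
    obtain ⟨_, _, hInv2⟩ := useful_trans hmon hspec.1 hv' hv''
    exact good_of_inv hmon hwin hInv2

end Aux

/-- **Active strategies suffice (Lemma `lemma_useless_moves`).**
If `f` is a positional monotone winning strategy for `k` cops against one robber
on a directed graph `G`, then there is a positional monotone winning strategy
`f*` for `k` cops such that for every position `(U, v)` arising in a play
consistent with `f*`: `f*(U,v) \ U ≠ ∅`, and every `u ∈ f*(U,v) \ U` is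
reachable from `v` in `G − U`. -/
theorem active_strategy_exists {V : Type*} (E : V → V → Prop) (k : ℕ)
    (f : Set V → V → Set V)
    (hk : UsesAtMost E f k) (hmon : StratMonotone E f) (hwin : StratWinning E f) :
    ∃ fs : Set V → V → Set V,
      UsesAtMost E fs k ∧ StratMonotone E fs ∧ StratWinning E fs ∧
      ∀ U v, FReach E fs U v →
        (fs U v \ U).Nonempty ∧ ∀ u ∈ fs U v \ U, u ∈ reachAvoid E U v := by
  classical
  refine ⟨fstar E f, ?_, ?_, ?_, ?_⟩
  · -- uses at most k cops
    intro Us v h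
    have hg := freach_good hmon hwin h
    have hspec := pick_spec hg
    have hfs : fstar E f Us v = mv E f (pick hg) Us v := dif_pos hg
    rw [hfs]
    obtain ⟨hfin, hcard⟩ := hk (pick hg) v hspec.1.1
    have hsub : mv E f (pick hg) Us v ⊆ f (pick hg) v := Set.inter_subset_left
    exact ⟨hfin.subset hsub, le_trans (Set.ncard_le_ncard hsub hfin) hcard⟩
  · -- monotone
    intro Us v h u hu hr
    have hg := freach_good hmon hwin h
    have hfs : fstar E f Us v = mv E f (pick hg) Us v := dif_pos hg
    rw [hfs] at hu hr
    exact mv_safe hmon (pick_spec hg).1 u hu hr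
  · -- winning
    rintro ⟨p, hp0, hps⟩
    have hfr : ∀ n, FReach E (fstar E f) (p n).1 (p n).2 := by
      intro n
      induction n with
      | zero =>
        have h0 := FReach.init (E := E) (f := fstar E f) (p 0).2
        rwa [← hp0] at h0
      | succ m ihm =>
        obtain ⟨h1, h2, h3⟩ := hps m
        rw [h1] at h2 h3 ⊢
        exact FReach.step _ _ ihm _ h2 h3
    have hdec : ∀ n, sInf (Cand E f (p (n + 1)).1 (p (n + 1)).2) <
        sInf (Cand E f (p n).1 (p n).2) := by
      intro n
      have hg := freach_good hmon hwin (hfr n)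
      have hspec := pick_spec hg
      obtain ⟨h1, h2, h3⟩ := hps n
      have hfs : fstar E f (p n).1 (p n).2 = mv E f (pick hg) (p n).1 (p n).2 := dif_pos hg
      rw [hfs] at h1
      rw [h1] at h2 h3
      obtain ⟨hra, hnw, hInv2⟩ := useful_trans hmon hspec.1 h2 h3
      have hstep : copStep E f (pick hg, (p n).2)
          (f (pick hg) (p n).2, (p (n + 1)).2) := ⟨rfl, hra, hnw⟩
      have haccU : Acc (rl E f) (pick hg, (p n).2) := acc_of_freach hwin hspec.1.1
      obtain ⟨U', hU1, hU2, hU3⟩ := to_useful hmon hwin hInv2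
      have hmem : rankOf E f (U', (p (n + 1)).2) ∈ Cand E f (p (n + 1)).1 (p (n + 1)).2 := by
        rw [h1]
        exact ⟨U', hU1, hU2, rfl⟩
      calc sInf (Cand E f (p (n + 1)).1 (p (n + 1)).2)
          ≤ rankOf E f (U', (p (n + 1)).2) := csInf_le (OrderBot.bddBelow _) hmem
        _ ≤ rankOf E f (f (pick hg) (p n).2, (p (n + 1)).2) := hU3
        _ < rankOf E f (pick hg, (p n).2) := rank_lt haccU hstep
        _ = sInf (Cand E f (p n).1 (p n).2) := hspec.2.2
    obtain ⟨n, hn⟩ := csInf_mem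
      (s := Set.range fun n => sInf (Cand E f (p n).1 (p n).2)) ⟨_, 0, rfl⟩
    have hle2 : sInf (Set.range fun n => sInf (Cand E f (p n).1 (p n).2)) ≤
        sInf (Cand E f (p (n + 1)).1 (p (n + 1)).2) :=
      csInf_le (OrderBot.bddBelow _) ⟨n + 1, rfl⟩
    exact absurd (hdec n) (not_lt.mpr (le_trans (le_of_eq hn) hle2))
  · -- active moves
    intro Us v h
    have hg := freach_good hmon hwin h
    have hspec := pick_spec hg
    have hfs : fstar E f Us v = mv E f (pick hg) Us v := dif_pos hg
    rw [hfs]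
    constructor
    · obtain ⟨x, hx1, hx2⟩ := hspec.2.1
      have hxUs : x ∉ Us := by
        rcases reachAvoid_endpoint hx2 with rfl | h'
        · exact hspec.1.2.1
        · exact h'
      exact ⟨x, ⟨hx1, Or.inr hx2⟩, hxUs⟩
    · rintro u ⟨⟨hu1, hu2⟩, hu3⟩
      rcases hu2 with h' | h'
      · exact absurd h' hu3
      · exact h'
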